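/- arXiv:1304.6883 — 7 statements merged into one kernel-verified Lean document; each statement's English description precedes it below -/
import Mathlib

section
/- For any association schemes (X,S_X) and (Y,S_Y), the assignment sending a morphism of association schemes f : (X,S_X) → (Y,S_Y) to the functor j(f) : j(X,S_X) → j(Y,S_Y) acting as f on objects and by (x,y) ↦ (f(x),f(y)) on morphisms is a bijection from Hom_AS((X,S_X),(Y,S_Y)) onto the set of morphisms of association schemoids from j(X,S_X) to j(Y,S_Y); that is, the functor j from association schemes to association schemoids is a fully faithful embedding. -/
open CategoryTheory

universe v u

/-- The set of all morphisms of a category, bundled with their endpoints. -/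
def Mor (C : Type u) [Category.{v} C] : Type max u v := Σ (x y : C), x ⟶ y

namespace Mor
variable {C : Type u} [Category.{v} C]
/-- The source of a morphism. -/
def src (m : Mor C) : C := m.1
/-- The target of a morphism. -/
def tgt (m : Mor C) : C := m.2.1
end Mor

/-- The identity of `x` as an element of `Mor C`. -/
def idMor {C : Type u} [Category.{v} C] (x : C) : Mor C := ⟨x, x, 𝟙 x⟩

/-- Bundle a morphism into `Mor C`. -/
def mk3 {C : Type u} [Category.{v} C] {x y : C} (f : x ⟶ y) : Mor C := ⟨x, y, f⟩

/-- `IsComp a b m` holds iff `a` and `b` are composable (the target of `b` is the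
source of `a`) and the composite `a ∘ b` equals `m`. -/
def IsComp {C : Type u} [Category.{v} C] (a b m : Mor C) : Prop :=
  ∃ (x y z : C) (f : x ⟶ y) (g : y ⟶ z), b = mk3 f ∧ a = mk3 g ∧ m = mk3 (f ≫ g)

/-- The fiber over `m` of the concatenation map `π_{στ} : σ ×_{ob C} τ → mor C`,
where `σ` is the class of the second (outer) factor and `τ` that of the first
(inner) factor. -/
def compFiber {C : Type u} [Category.{v} C] (σ τ : Set (Mor C)) (m : Mor C) :
    Set (Mor C × Mor C) :=
  {p | p.1 ∈ σ ∧ p.2 ∈ τ ∧ IsComp p.1 p.2 m}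

/-- A quasi-schemoid: a small category together with a partition of its set of
morphisms satisfying the concatenation axiom. -/
structure QuasiSchemoid (C : Type u) [Category.{v} C] where
  part : Set (Set (Mor C))
  isPartition : Setoid.IsPartition part
  concat : ∀ σ ∈ part, ∀ τ ∈ part, ∀ μ ∈ part, ∀ f ∈ μ, ∀ g ∈ μ,
    Nonempty ((compFiber σ τ f : Set (Mor C × Mor C)) ≃ (compFiber σ τ g : Set (Mor C × Mor C)))

/-- `p^μ_{τσ} = n` : every `m ∈ μ` has exactly `n` factorizations with outer factor
in `τ` and inner factor in `σ`. -/
def structEq {C : Type u} [Category.{v} C] (τ σ μ : Set (Mor C)) (n : ℕ) : Prop :=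
  ∀ m ∈ μ, Nat.card (compFiber τ σ m) = n

/-- The set `J₀` of identities. -/
def J0 (C : Type u) [Category.{v} C] : Set (Mor C) := {m | ∃ x : C, m = idMor x}

/-- A quasi-schemoid is unital if every class meeting `J₀` is contained in `J₀`. -/
def QuasiSchemoid.IsUnital {C : Type u} [Category.{v} C] (Q : QuasiSchemoid C) : Prop :=
  ∀ σ ∈ Q.part, (σ ∩ J0 C).Nonempty → σ ⊆ J0 C

/-- A contravariant endofunctor. -/
structure ContraFunctor (C : Type u) [Category.{v} C] where
  obj : C → C
  map : ∀ {x y : C}, (x ⟶ y) → (obj y ⟶ obj x)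
  map_id : ∀ x : C, map (𝟙 x) = 𝟙 (obj x)
  map_comp : ∀ {x y z : C} (f : x ⟶ y) (g : y ⟶ z), map (f ≫ g) = map g ≫ map f

/-- The action of a contravariant functor on bundled morphisms. -/
def ContraFunctor.onMor {C : Type u} [Category.{v} C] (T : ContraFunctor C) (m : Mor C) :
    Mor C :=
  ⟨T.obj m.2.1, T.obj m.1, T.map m.2.2⟩

/-- The set `J` of endomorphisms. -/
def JEndo (C : Type u) [Category.{v} C] : Set (Mor C) := {m | m.src = m.tgt}

/-- An association schemoid. -/
structure AssnSchemoid (C : Type u) [Category.{v} C] extends QuasiSchemoid C where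
  T : ContraFunctor C
  T_invol : ∀ m : Mor C, T.onMor (T.onMor m) = m
  T_part : ∀ σ ∈ part, T.onMor '' σ ∈ part
  endo : ∀ σ ∈ part, (σ ∩ JEndo C).Nonempty → σ ⊆ JEndo C

universe v₂ u₂

/-- The action of a functor on bundled morphisms. -/
def morMap {C : Type u} {D : Type u₂} [Category.{v} C] [Category.{v₂} D] (F : C ⥤ D)
    (m : Mor C) : Mor D :=
  ⟨F.obj m.1, F.obj m.2.1, F.map m.2.2⟩

/-- A functor is a morphism of quasi-schemoids if each class of the source partition is
mapped into some class of the target partition. -/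
def IsQSMor {C : Type u} {D : Type u₂} [Category.{v} C] [Category.{v₂} D]
    (SC : Set (Set (Mor C))) (SD : Set (Set (Mor D))) (F : C ⥤ D) : Prop :=
  ∀ σ ∈ SC, ∃ τ ∈ SD, morMap F '' σ ⊆ τ

/-- A morphism of association schemoids: a morphism of quasi-schemoids commuting with the
contravariant involutions. -/
def IsASMor {C : Type u} {D : Type u₂} [Category.{v} C] [Category.{v₂} D]
    (SC : Set (Set (Mor C))) (SD : Set (Set (Mor D)))
    (TC : ContraFunctor C) (TD : ContraFunctor D) (F : C ⥤ D) : Prop :=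
  IsQSMor SC SD F ∧ ∀ m : Mor C, morMap F (TC.onMor m) = TD.onMor (morMap F m)

/-- `S₀` : the classes containing some identity. -/
def S0 {C : Type u} [Category.{v} C] (S : Set (Set (Mor C))) : Set (Set (Mor C)) :=
  {α | α ∈ S ∧ ∃ x : C, idMor x ∈ α}

/-- `_αS_β = {σ ∈ S | p^σ_{σα} = p^σ_{βσ} = 1}`. -/
def hom2 {C : Type u} [Category.{v} C] (S : Set (Set (Mor C))) (α β : Set (Mor C)) :
    Set (Set (Mor C)) :=
  {σ | σ ∈ S ∧ structEq σ α σ 1 ∧ structEq β σ σ 1}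

/-- The partition class containing a given morphism. -/
def classOf {C : Type u} [Category.{v} C] (S : Set (Set (Mor C))) (m : Mor C) :
    Set (Mor C) :=
  {m' | ∃ σ ∈ S, m ∈ σ ∧ m' ∈ σ}

/-- An association scheme on a finite set `X`. -/
structure AssocScheme (X : Type u) [Fintype X] where
  part : Set (Set (X × X))
  isPartition : Setoid.IsPartition part
  diag_mem : {p : X × X | p.1 = p.2} ∈ part
  symm_mem : ∀ s ∈ part, Prod.swap '' s ∈ part
  regular : ∀ e ∈ part, ∀ f ∈ part, ∀ g ∈ part, ∀ p ∈ g, ∀ q ∈ g,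
    Nat.card {y : X | (p.1, y) ∈ e ∧ (y, p.2) ∈ f} =
      Nat.card {y : X | (q.1, y) ∈ e ∧ (y, q.2) ∈ f}

/-- The underlying category of the schemoid `j(X,S)` : objects are the points of `X`
and there is exactly one morphism `(x,y) : y ⟶ x` for every pair `(x,y)`. -/
def JCat (X : Type u) : Type u := X

instance JCat.category (X : Type u) : Category (JCat X) where
  Hom _ _ := PUnit
  id _ := ⟨⟩
  comp _ _ := ⟨⟩

/-- The class of morphisms of `JCat X` corresponding to a set of pairs `s ⊆ X × X` :
the morphism `(x,y) : y ⟶ x` belongs to it iff `(x,y) ∈ s`. -/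
def jPartClass {X : Type u} (s : Set (X × X)) : Set (Mor (JCat X)) :=
  {m | ((Mor.tgt (C := JCat X) m, Mor.src (C := JCat X) m) : X × X) ∈ s}

/-- The partition of `mor(j(X,S))` induced by an association scheme `(X,S)`. -/
def jPart {X : Type u} [Fintype X] (A : AssocScheme X) : Set (Set (Mor (JCat X))) :=
  {t | ∃ s ∈ A.part, t = jPartClass s}

/-- The contravariant involution of `j(X,S)` : `T(x) = x`, `T(x,y) = (y,x)`. -/
def jT (X : Type u) : ContraFunctor (JCat X) where
  obj x := x
  map _ := ⟨⟩
  map_id _ := rfl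
  map_comp _ _ := rfl

/-- The functor `j(f) : j(X,S_X) ⥤ j(Y,S_Y)` induced by a map `f : X → Y`. -/
def jFunctor {X : Type u} {Y : Type u} (f : X → Y) : JCat X ⥤ JCat Y where
  obj x := f x
  map _ := ⟨⟩

/-- A morphism of association schemes. -/
def IsSchemeHom {X : Type u} {Y : Type u} [Fintype X] [Fintype Y]
    (A : AssocScheme X) (B : AssocScheme Y) (f : X → Y) : Prop :=
  ∀ s ∈ A.part, ∃ t ∈ B.part, (fun p : X × X => (f p.1, f p.2)) '' s ⊆ t

/-- Theorem 3.2 (i) of Kuribayashi–Matsuo: the functor `j : AS → ASmd` is a fully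
faithful embedding: for association schemes `(X,S_X)` and `(Y,S_Y)`, the assignment
`f ↦ j(f)` is a bijection from `Hom_AS((X,S_X),(Y,S_Y))` onto the set of morphisms of
association schemoids `j(X,S_X) → j(Y,S_Y)`. -/
theorem jFunctor_bijOn_schemoid_morphisms
    {X : Type u} {Y : Type u} [Fintype X] [Fintype Y]
    (A : AssocScheme X) (B : AssocScheme Y) :
    Set.BijOn (fun f : X → Y => jFunctor f)
      {f : X → Y | IsSchemeHom A B f}
      {F : JCat X ⥤ JCat Y | IsASMor (jPart A) (jPart B) (jT X) (jT Y) F} := by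
  refine ⟨?_, ?_, ?_⟩
  · intro f hf
    refine ⟨?_, fun m => rfl⟩
    rintro σ ⟨s, hs, rfl⟩
    obtain ⟨t, ht, hsub⟩ := hf s hs
    refine ⟨jPartClass t, ⟨t, ht, rfl⟩, ?_⟩
    rintro m ⟨n, hn, rfl⟩
    exact hsub ⟨(n.2.1, n.1), hn, rfl⟩
  · intro f _ g _ h
    funext x
    exact congrArg (fun F : JCat X ⥤ JCat Y => F.obj x) h
  · rintro F ⟨hQ, _⟩
    refine ⟨F.obj, ?_, ?_⟩
    · intro s hs
      obtain ⟨τ, ⟨t, ht, rfl⟩, hsub⟩ := hQ (jPartClass s) ⟨s, hs, rfl⟩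
      refine ⟨t, ht, ?_⟩
      rintro p ⟨⟨x, y⟩, hxy, rfl⟩
      exact hsub ⟨⟨y, x, ⟨⟩⟩, hxy, rfl⟩
    · symm
      exact CategoryTheory.Functor.ext (fun x => rfl)
        (fun x y g => (inferInstance : Subsingleton PUnit).elim _ _)
end

section
/- For any groupoids K and H, the map sending a functor F : K → H to the induced morphism of quasi-schemoids S̃(F) : S̃(K) → S̃(H) is injective; that is, the functor S̃ from groupoids to quasi-schemoids is faithful. -/
open CategoryTheory

universe v u

universe v₂ u₂

/-- The underlying objects of the schemoid `S̃(H)` : the morphisms of `H`. -/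
def TildeCat (H : Type u) [Category.{v} H] : Type max u v := Mor H

/-- Reinterpret an object of `TildeCat H` as a morphism of `H`. -/
def TildeCat.toMor {H : Type u} [Category.{v} H] (g : TildeCat H) : Mor H := g

/-- The category `S̃(H)` : `Hom(g,h)` has exactly one element `(h,g)` when
`t(h) = t(g)`, and is empty otherwise. -/
instance TildeCat.category (H : Type u) [Category.{v} H] : Category (TildeCat H) where
  Hom g h := PLift (g.toMor.tgt = h.toMor.tgt)
  id _ := ⟨rfl⟩
  comp p q := ⟨p.down.trans q.down⟩
  id_comp _ := rfl
  comp_id _ := rfl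
  assoc _ _ _ := rfl

/-- `S̃(H)` is a groupoid. -/
instance TildeCat.groupoid (H : Type u) [Category.{v} H] : Groupoid (TildeCat H) where
  inv p := ⟨p.down.symm⟩
  inv_comp _ := rfl
  comp_inv _ := rfl

/-- For `g, h : mor H` with `t(g) = t(h)`, the morphism `h⁻¹ ∘ g` of the groupoid `H`. -/
def conjDiff {H : Type u} [Groupoid.{v} H] (g h : Mor H) (e : Mor.tgt g = Mor.tgt h) :
    Mor H :=
  ⟨g.1, h.1, g.2.2 ≫ eqToHom e ≫ Groupoid.inv h.2.2⟩

/-- The class `G_f = {(k,l) | k⁻¹ ∘ l = f}` of the partition of `mor(S̃(H))`: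
the morphism `(h,g) : g → h` belongs to `G_f` iff `h⁻¹ ∘ g = f`. -/
def tildeClass {H : Type u} [Groupoid.{v} H] (f : Mor H) : Set (Mor (TildeCat H)) :=
  {m | conjDiff (TildeCat.toMor m.1) (TildeCat.toMor m.2.1) m.2.2.down = f}

/-- The partition of `mor(S̃(H))` into the classes `G_f`. -/
def tildePart (H : Type u) [Groupoid.{v} H] : Set (Set (Mor (TildeCat H))) :=
  {s | ∃ f : Mor H, s = tildeClass f}

/-- The contravariant involution of `S̃(H)` : `T(f) = f` on objects and
`T(h,g) = (g,h)` on morphisms. -/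
def tildeT (H : Type u) [Category.{v} H] : ContraFunctor (TildeCat H) where
  obj g := g
  map p := ⟨p.down.symm⟩
  map_id _ := rfl
  map_comp _ _ := rfl

/-- The functor `S̃(F) : S̃(K) → S̃(H)` induced by a functor `F : K ⥤ H`. -/
def tildeMap {K : Type u} {H : Type u} [Category.{v} K] [Category.{v} H] (F : K ⥤ H) :
    TildeCat K ⥤ TildeCat H where
  obj g := morMap F g
  map p := ⟨congrArg F.obj p.down⟩
  map_id _ := rfl
  map_comp _ _ := rfl

/-- The base points of `S̃(H)` : the identities of `H`, viewed as objects of `S̃(H)`. -/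
def tildeBase (H : Type u) [Category.{v} H] : Set (TildeCat H) :=
  {m | ∃ x : H, m = idMor x}

lemma morHeq_of_mor_eq {H : Type u} [Category.{v} H] {a b a' b' : H}
    (f : a ⟶ b) (g : a' ⟶ b')
    (h : (⟨a, b, f⟩ : Mor H) = ⟨a', b', g⟩) : HEq f g := by
  obtain ⟨rfl, h2⟩ := Sigma.mk.inj_iff.mp h
  obtain ⟨rfl, h3⟩ := Sigma.mk.inj_iff.mp (eq_of_heq h2)
  exact h3

/-- Theorem 3.2 (ii) of Kuribayashi–Matsuo: the functor `S̃( ) : Gpd → qASmd` is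
faithful, i.e. `F ↦ S̃(F)` is injective. -/
theorem tildeMap_injective {K : Type u} {H : Type u} [Groupoid.{v} K] [Groupoid.{v} H] :
    Function.Injective (fun F : K ⥤ H => tildeMap F) := by
  intro F G h
  have hobj : ∀ m : Mor K, morMap F m = morMap G m := fun m =>
    congrArg (fun T : TildeCat K ⥤ TildeCat H => T.obj m) h
  have ho : ∀ x : K, F.obj x = G.obj x := fun x =>
    congrArg Sigma.fst (hobj (idMor x))
  refine CategoryTheory.Functor.ext ho ?_
  intro x y f
  have hm := hobj ⟨x, y, f⟩
  have h1 : F.obj x = G.obj x := ho x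
  have h2 : F.obj y = G.obj y := ho y
  have hheq : HEq (F.map f) (G.map f) := morHeq_of_mor_eq _ _ hm
  exact (CategoryTheory.conj_eqToHom_iff_heq _ _ h1 h2).mpr hheq
end

section
/- For any groupoids K and H, the map sending a functor F : K → H to S̃(F) is a bijection from Hom_Gpd(K,H) onto the set of morphisms of quasi-schemoids G : S̃(K) → S̃(H) that preserve base points, i.e. such that G({1_x | x ∈ ob(K)}) ⊆ {1_y | y ∈ ob(H)}; that is, S̃ : Gpd → (qASmd)₀ is fully faithful. -/
open CategoryTheory

universe v u

universe v₂ u₂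

namespace TildeAux

open CategoryTheory

lemma mor_mk_heq {D : Type u} [Category.{v} D] {a b a' b' : D} {u : a ⟶ b} {u' : a' ⟶ b'}
    (h : (⟨a, b, u⟩ : Mor D) = ⟨a', b', u'⟩) : HEq u u' := by
  have h1 : a = a' := congrArg Sigma.fst h
  subst h1
  have h2 : b = b' := congrArg (fun m : Mor D => m.2.1) h
  subst h2
  simpa using h

lemma mk3_inj {C : Type u} [Category.{v} C] {x y : C} {f g : x ⟶ y}
    (h : (mk3 f : Mor C) = mk3 g) : f = g :=
  eq_of_heq (mor_mk_heq h)

lemma mor_eq_mk3 {C : Type u} [Category.{v} C] (m : Mor C) {x y : C}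
    (h1 : m.1 = x) (h2 : m.2.1 = y) :
    m = mk3 (eqToHom h1.symm ≫ m.2.2 ≫ eqToHom h2) := by
  obtain ⟨a, b, u⟩ := m
  dsimp at h1 h2
  subst h1; subst h2
  simp [mk3]
  rfl

variable {K : Type u} {H : Type u} [Groupoid.{v} K] [Groupoid.{v} H]

lemma conjDiff_congr {a a' b b' : Mor H} (ha : a = a') (hb : b = b')
    (e : Mor.tgt a = Mor.tgt b) (e' : Mor.tgt a' = Mor.tgt b') :
    conjDiff a b e = conjDiff a' b' e' := by
  subst ha; subst hb; rfl

/-- The class invariant of a morphism of `S̃(H)`. -/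
def conj (m : Mor (TildeCat H)) : Mor H :=
  conjDiff (TildeCat.toMor m.1) (TildeCat.toMor m.2.1) m.2.2.down

lemma conj_image_eq (G : TildeCat K ⥤ TildeCat H)
    (hQ : IsQSMor (tildePart K) (tildePart H) G)
    (m m' : Mor (TildeCat K)) (h : conj m = conj m') :
    conj (morMap G m) = conj (morMap G m') := by
  obtain ⟨τ, ⟨f', rfl⟩, hsub⟩ := hQ (tildeClass (conj m)) ⟨conj m, rfl⟩
  have h1 : morMap G m ∈ tildeClass f' := hsub ⟨m, rfl, rfl⟩
  have h2 : morMap G m' ∈ tildeClass f' := hsub ⟨m', h.symm, rfl⟩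
  exact h1.trans h2.symm

lemma conj_id (g : TildeCat H) :
    conj (⟨g, g, 𝟙 g⟩ : Mor (TildeCat H)) =
      ⟨(TildeCat.toMor g).1, (TildeCat.toMor g).1, 𝟙 _⟩ := by
  simp [conj, conjDiff, TildeCat.toMor]
  exact congrArg (fun u => (⟨g.1, g.1, u⟩ : Mor H))
    (by simp [Groupoid.inv_eq_inv] : g.2.2 ≫ eqToHom rfl ≫ Groupoid.inv g.2.2 = 𝟙 g.1)

lemma morMap_id (G : TildeCat K ⥤ TildeCat H) (g : TildeCat K) :
    morMap G (⟨g, g, 𝟙 g⟩ : Mor (TildeCat K)) = ⟨G.obj g, G.obj g, 𝟙 (G.obj g)⟩ := by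
  simp [morMap]
  rfl

end TildeAux

/-- Corollary 3.3 of Kuribayashi–Matsuo: `S̃ : Gpd → (qASmd)₀` is fully faithful, i.e.
`F ↦ S̃(F)` is a bijection from `Hom_Gpd(K,H)` onto the set of morphisms of
quasi-schemoids `S̃(K) → S̃(H)` preserving the base points. -/
theorem tildeMap_bijOn_based_morphisms
    {K : Type u} {H : Type u} [Groupoid.{v} K] [Groupoid.{v} H] :
    Set.BijOn (fun F : K ⥤ H => tildeMap F) Set.univ
      {G : TildeCat K ⥤ TildeCat H |
        IsQSMor (tildePart K) (tildePart H) G ∧ G.obj '' tildeBase K ⊆ tildeBase H} :=  by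
  classical
  refine ⟨?_, ?_, ?_⟩
  · -- MapsTo
    rintro F -
    refine ⟨?_, ?_⟩
    · rintro σ ⟨f, rfl⟩
      refine ⟨tildeClass (morMap F f), ⟨morMap F f, rfl⟩, ?_⟩
      rintro _ ⟨m, hm, rfl⟩
      obtain ⟨⟨a, b, p⟩, ⟨c, d, q⟩, ⟨e⟩⟩ := m
      dsimp [TildeCat.toMor, Mor.tgt] at e
      subst e
      rw [← hm]
      show TildeAux.conj _ = morMap F (conjDiff _ _ _)
      simp [TildeAux.conj, conjDiff, morMap, tildeMap, TildeCat.toMor,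
        Groupoid.inv_eq_inv]
      exact congrArg (fun u => (⟨F.obj a, F.obj c, u⟩ : Mor H))
        (by simp [Groupoid.inv_eq_inv] : F.map p ≫ eqToHom rfl ≫ Groupoid.inv (F.map q) =
          F.map p ≫ F.map (eqToHom rfl) ≫ F.map (Groupoid.inv q))
    · rintro _ ⟨m, ⟨x, rfl⟩, rfl⟩
      refine ⟨F.obj x, ?_⟩
      show morMap F (idMor x) = idMor (F.obj x)
      simp [morMap, idMor]
      rfl
  · -- InjOn
    rintro F - F' - h
    dsimp at h
    have hobj : ∀ x : K, F.obj x = F'.obj x := by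
      intro x
      have := congrArg (fun G : TildeCat K ⥤ TildeCat H => Mor.src (TildeCat.toMor (G.obj (idMor x)))) h
      simpa [tildeMap, morMap, idMor, Mor.src, TildeCat.toMor] using this
    refine Functor.hext hobj ?_
    intro x y f
    have h2 := congrArg (fun G : TildeCat K ⥤ TildeCat H => (TildeCat.toMor (G.obj (mk3 f)))) h
    exact TildeAux.mor_mk_heq h2
  · -- SurjOn
    rintro G ⟨hQ, hB⟩
    have hbase : ∀ x : K, ∃ y : H, G.obj (idMor x) = idMor y := fun x =>
      hB ⟨idMor x, ⟨x, rfl⟩, rfl⟩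
    choose φ hφ using hbase
    haveI : ∀ a b : TildeCat H, Subsingleton (a ⟶ b) := fun a b =>
      ⟨fun p q => by change PLift _ at p q; cases p; cases q; rfl⟩
    let ι : Mor K → TildeCat K := fun m => m
    have hsrc : ∀ g : Mor K, (TildeCat.toMor (G.obj (ι g))).1 = φ g.1 := by
      intro g
      have hpre : TildeAux.conj (⟨ι g, ι g, 𝟙 (ι g)⟩ : Mor (TildeCat K)) =
          TildeAux.conj (⟨ι (idMor g.1), ι (idMor g.1), 𝟙 (ι (idMor g.1))⟩ :
            Mor (TildeCat K)) := by
        rw [TildeAux.conj_id, TildeAux.conj_id]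
        exact rfl
      have key := TildeAux.conj_image_eq G hQ _ _ hpre
      rw [TildeAux.morMap_id, TildeAux.morMap_id, TildeAux.conj_id, TildeAux.conj_id] at key
      have key2 := congrArg Sigma.fst key
      dsimp at key2
      rw [key2]
      show (TildeCat.toMor (G.obj (ι (idMor g.1)))).1 = φ g.1
      rw [hφ g.1]
      exact rfl
    have htgt : ∀ {x y : K} (f : x ⟶ y), (TildeCat.toMor (G.obj (ι (mk3 f)))).2.1 = φ y := by
      intro x y f
      have p : ι (mk3 f) ⟶ ι (idMor y) := ⟨rfl⟩
      have h3 := (G.map p).down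
      rw [hφ y] at h3
      exact h3
    let Fm : ∀ {x y : K}, (x ⟶ y) → (φ x ⟶ φ y) := fun {x y} f =>
      eqToHom (hsrc (mk3 f)).symm ≫ (TildeCat.toMor (G.obj (ι (mk3 f)))).2.2 ≫
        eqToHom (htgt f)
    have hGF : ∀ {x y : K} (f : x ⟶ y), TildeCat.toMor (G.obj (ι (mk3 f))) = mk3 (Fm f) :=
      fun {x y} f => TildeAux.mor_eq_mk3 _ (hsrc (mk3 f)) (htgt f)
    have hid : ∀ x : K, Fm (𝟙 x) = 𝟙 (φ x) := by
      intro x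
      apply TildeAux.mk3_inj
      rw [← hGF (𝟙 x)]
      exact hφ x
    have hcomp : ∀ {x y z : K} (f : x ⟶ y) (g : y ⟶ z), Fm (f ≫ g) = Fm f ≫ Fm g := by
      intro x y z f g
      have hpre : TildeAux.conj (⟨ι (mk3 (f ≫ g)), ι (mk3 g), ⟨rfl⟩⟩ : Mor (TildeCat K)) =
          TildeAux.conj (⟨ι (mk3 f), ι (idMor y), ⟨rfl⟩⟩ : Mor (TildeCat K)) := by
        simp [TildeAux.conj, conjDiff, mk3, idMor, TildeCat.toMor, ι, Groupoid.inv_eq_inv]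
        exact congrArg (fun u => (⟨x, y, u⟩ : Mor K))
          (by simp [Groupoid.inv_eq_inv] : f ≫ g ≫ eqToHom rfl ≫ Groupoid.inv g =
            f ≫ eqToHom rfl ≫ Groupoid.inv (𝟙 y))
      have key := TildeAux.conj_image_eq G hQ _ _ hpre
      have key2 : conjDiff (mk3 (Fm (f ≫ g))) (mk3 (Fm g)) rfl =
          conjDiff (mk3 (Fm f)) (idMor (φ y)) rfl := by
        calc conjDiff (mk3 (Fm (f ≫ g))) (mk3 (Fm g)) rfl
            = TildeAux.conj (morMap G (⟨ι (mk3 (f ≫ g)), ι (mk3 g), ⟨rfl⟩⟩ :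
                Mor (TildeCat K))) :=
              TildeAux.conjDiff_congr (hGF _).symm (hGF _).symm _ _
          _ = TildeAux.conj (morMap G (⟨ι (mk3 f), ι (idMor y), ⟨rfl⟩⟩ :
                Mor (TildeCat K))) := key
          _ = conjDiff (mk3 (Fm f)) (idMor (φ y)) rfl :=
              TildeAux.conjDiff_congr (hGF f) (hφ y) _ _
      have h5 : Fm (f ≫ g) ≫ eqToHom rfl ≫ Groupoid.inv (Fm g) =
          Fm f ≫ eqToHom rfl ≫ Groupoid.inv (𝟙 (φ y)) := eq_of_heq (TildeAux.mor_mk_heq key2)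
      have h6 : Fm (f ≫ g) ≫ inv (Fm g) = Fm f := by
        simpa [mk3, idMor, Groupoid.inv_eq_inv] using h5
      rw [← h6]
      simp
    let F : K ⥤ H := CategoryTheory.Functor.mk φ (fun {x y} f => Fm f) hid
      (fun f g => hcomp f g)
    refine ⟨F, Set.mem_univ _, ?_⟩
    have hobjeq : ∀ g : TildeCat K, (tildeMap F).obj g = G.obj g := by
      intro g
      exact (hGF g.2.2).symm
    apply Functor.hext
    · exact hobjeq
    · intro X Y p
      exact Subsingleton.helim (by rw [hobjeq X, hobjeq Y]) _ _
end

section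
/- Let (C,S,T) be a semi-thin association schemoid. For any α, β, γ ∈ S₀, σ ∈ _αS_β and τ ∈ _βS_γ, there exists a unique element μ ∈ _αS_γ such that p^μ_{τσ} = 1; moreover p^{μ'}_{τσ} = 0 for every μ' ∈ S with μ' ≠ μ. -/
open CategoryTheory

universe v u

universe v₂ u₂

/-- The inverse of a bundled morphism in a groupoid. -/
def morInv {C : Type u} [Groupoid.{v} C] (m : Mor C) : Mor C :=
  ⟨m.2.1, m.1, Groupoid.inv m.2.2⟩

/-- A semi-thin association schemoid. -/
def IsSemiThin {C : Type u} [Groupoid.{v} C] (A : AssnSchemoid C) : Prop :=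
  A.toQuasiSchemoid.IsUnital ∧
  (∀ σ ∈ A.part, ∀ x : C, ({f | f ∈ σ ∧ Mor.src f = x} : Set (Mor C)).Subsingleton) ∧
  (∀ m : Mor C, A.T.onMor m = morInv m)

/-- A thin association schemoid with base point set `V`. -/
def IsThin {C : Type u} [Groupoid.{v} C] (A : AssnSchemoid C) (V : Set C) : Prop :=
  IsSemiThin A ∧
  (∀ x y : C, Subsingleton (x ⟶ y)) ∧
  (∀ x : C, ∃! v : C, v ∈ V ∧ Nonempty (x ⟶ v)) ∧
  Set.BijOn (fun v => classOf A.part (idMor v)) V (S0 A.part)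

section AuxSchemoid

variable {C : Type u} [Groupoid.{v} C]

lemma mk3_inj_aux {x y x' y' : C} {f : x ⟶ y} {f' : x' ⟶ y'}
    (h : mk3 f = mk3 f') : ∃ (_ : x = x') (_ : y = y'), HEq f f' := by
  have h' : (⟨x, y, f⟩ : Σ (x y : C), x ⟶ y) = ⟨x', y', f'⟩ := h
  injection h' with h1 h2
  subst h1
  injection eq_of_heq h2 with h3 h4
  subst h3
  exact ⟨rfl, rfl, h4⟩

lemma aux_isComp_src {a b m : Mor C} (h : IsComp a b m) : b.1 = m.1 := by
  obtain ⟨x, y, z, f, g, rfl, rfl, rfl⟩ := h; rfl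

lemma aux_isComp_tgt {a b m : Mor C} (h : IsComp a b m) : a.2.1 = m.2.1 := by
  obtain ⟨x, y, z, f, g, rfl, rfl, rfl⟩ := h; rfl

lemma aux_m_unique {t s m m' : Mor C} (h : IsComp t s m) (h' : IsComp t s m') :
    m = m' := by
  obtain ⟨x, y, z, f, g, rfl, rfl, rfl⟩ := h
  obtain ⟨x', y', z', f', g', hf, hg, rfl⟩ := h'
  obtain ⟨rfl, rfl, hff⟩ := mk3_inj_aux hf
  obtain rfl := eq_of_heq hff
  obtain ⟨-, rfl, hgg⟩ := mk3_inj_aux hg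
  obtain rfl := eq_of_heq hgg
  rfl

lemma aux_cancel {t t' s m : Mor C} (h : IsComp t s m) (h' : IsComp t' s m) :
    t = t' := by
  obtain ⟨x, y, z, f, g, rfl, rfl, rfl⟩ := h
  obtain ⟨x', y', z', f', g', hf, ht', hm⟩ := h'
  obtain ⟨rfl, rfl, hff⟩ := mk3_inj_aux hf
  obtain rfl := eq_of_heq hff
  obtain ⟨-, rfl, hgg⟩ := mk3_inj_aux hm
  have hc : f ≫ g = f ≫ g' := eq_of_heq hgg
  rw [cancel_epi] at hc
  rw [ht', hc]

lemma aux_isComp_id_left (m : Mor C) : IsComp m (idMor m.1) m := by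
  obtain ⟨x, y, f⟩ := m
  exact ⟨x, x, y, 𝟙 x, f, rfl, rfl, by simp [mk3]; rfl⟩

lemma aux_isComp_id_right (m : Mor C) : IsComp (idMor m.2.1) m m := by
  obtain ⟨x, y, f⟩ := m
  exact ⟨x, y, y, f, 𝟙 y, rfl, rfl, by simp [mk3]; rfl⟩

lemma aux_isComp_inv (m : Mor C) : IsComp (morInv m) m (idMor m.1) := by
  obtain ⟨x, y, f⟩ := m
  exact ⟨x, y, x, f, Groupoid.inv f, rfl, rfl, by simp [mk3, idMor]; rfl⟩

lemma aux_morInv_morInv (m : Mor C) : morInv (morInv m) = m := by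
  obtain ⟨x, y, f⟩ := m
  simp [morInv]; rfl

lemma aux_of_id_left {a b m : Mor C} (hb : b ∈ J0 C) (h : IsComp a b m) :
    a = m ∧ b = idMor m.1 := by
  obtain ⟨w, rfl⟩ := hb
  obtain ⟨x, y, z, f, g, hf, rfl, rfl⟩ := h
  have hf' : mk3 (𝟙 w) = mk3 f := hf
  obtain ⟨rfl, rfl, hff⟩ := mk3_inj_aux hf'
  obtain rfl := eq_of_heq hff.symm
  constructor <;> simp [mk3, idMor] <;> rfl

lemma aux_of_id_right {a b m : Mor C} (ha : a ∈ J0 C) (h : IsComp a b m) :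
    b = m ∧ a = idMor m.2.1 := by
  obtain ⟨w, rfl⟩ := ha
  obtain ⟨x, y, z, f, g, rfl, hg, rfl⟩ := h
  have hg' : mk3 (𝟙 w) = mk3 g := hg
  obtain ⟨rfl, rfl, hgg⟩ := mk3_inj_aux hg'
  obtain rfl := eq_of_heq hgg.symm
  constructor <;> simp [mk3, idMor] <;> rfl

/-- Composite of two bundled morphisms, given a proof of composability. -/
def morComp (m n : Mor C) (h : m.2.1 = n.1) : Mor C :=
  ⟨m.1, n.2.1, m.2.2 ≫ eqToHom h ≫ n.2.2⟩

lemma aux_isComp_morComp (m n : Mor C) (h : m.2.1 = n.1) :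
    IsComp n m (morComp m n h) := by
  obtain ⟨x, y, f⟩ := m
  obtain ⟨y', z, g⟩ := n
  have h' : y = y' := h
  subst h'
  exact ⟨x, y, z, f, g, rfl, rfl, by simp [morComp, mk3]; rfl⟩

lemma aux_isComp_inv_left {t s m : Mor C} (h : IsComp t s m) :
    IsComp m (morInv s) t := by
  obtain ⟨x, y, z, f, g, rfl, rfl, rfl⟩ := h
  exact ⟨y, x, z, Groupoid.inv f, f ≫ g, rfl, rfl, by simp [mk3]; rfl⟩

lemma aux_isComp_inv_left' {a s t : Mor C} (h : IsComp a (morInv s) t) :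
    IsComp t s a := by
  have h2 := aux_isComp_inv_left h
  rwa [aux_morInv_morInv] at h2

end AuxSchemoid

/-- Lemma 4.4 of Kuribayashi–Matsuo: in a semi-thin association schemoid, for
`σ ∈ _αS_β` and `τ ∈ _βS_γ` there is a unique `μ ∈ _αS_γ` with `p^μ_{τσ} = 1`, and
`p^{μ'}_{τσ} = 0` for every other class `μ'`. -/
theorem semiThin_unique_composition_class
    {C : Type u} [Groupoid.{v} C] (A : AssnSchemoid C) (hst : IsSemiThin A)
    {α β γ : Set (Mor C)} (hα : α ∈ S0 A.part) (hβ : β ∈ S0 A.part) (hγ : γ ∈ S0 A.part)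
    {σ τ : Set (Mor C)} (hσ : σ ∈ hom2 A.part α β) (hτ : τ ∈ hom2 A.part β γ) :
    ∃ μ ∈ hom2 A.part α γ, structEq τ σ μ 1 ∧
      (∀ μ'' ∈ hom2 A.part α γ, structEq τ σ μ'' 1 → μ'' = μ) ∧
      (∀ μ' ∈ A.part, μ' ≠ μ → structEq τ σ μ' 0) := by
  obtain ⟨hσP, hσ1, hσ2⟩ := hσ
  obtain ⟨hτP, hτ1, hτ2⟩ := hτ
  have hPart := A.isPartition
  have hne : ∀ δ ∈ A.part, δ.Nonempty := by
    intro δ hδ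
    rcases Set.eq_empty_or_nonempty δ with h | h
    · exact absurd (h ▸ hδ) hPart.1
    · exact h
  have hcls : ∀ {δ δ' : Set (Mor C)}, δ ∈ A.part → δ' ∈ A.part →
      ∀ {m : Mor C}, m ∈ δ → m ∈ δ' → δ = δ' := by
    intro δ δ' hδ hδ' m hm hm'
    obtain ⟨w, -, hw⟩ := hPart.2 m
    rw [hw δ ⟨hδ, hm⟩, hw δ' ⟨hδ', hm'⟩]
  have hTmor : A.T.onMor = morInv := funext hst.2.2
  have hinvP : ∀ δ ∈ A.part, morInv '' δ ∈ A.part := by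
    intro δ hδ
    have := A.T_part δ hδ
    rwa [hTmor] at this
  have hthin_src : ∀ δ ∈ A.part, ∀ {p q : Mor C}, p ∈ δ → q ∈ δ → p.1 = q.1 → p = q := by
    intro δ hδ p q hp hq hpq
    exact hst.2.1 δ hδ q.1 ⟨hp, hpq⟩ ⟨hq, rfl⟩
  have hthin_tgt : ∀ δ ∈ A.part, ∀ {p q : Mor C}, p ∈ δ → q ∈ δ → p.2.1 = q.2.1 → p = q := by
    intro δ hδ p q hp hq hpq
    have h1 : morInv p = morInv q :=
      hthin_src _ (hinvP δ hδ) ⟨p, hp, rfl⟩ ⟨q, hq, rfl⟩ hpq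
    have h2 := congrArg morInv h1
    rwa [aux_morInv_morInv, aux_morInv_morInv] at h2
  have hJ0 : ∀ {δ : Set (Mor C)}, δ ∈ S0 A.part → δ ⊆ J0 C := by
    rintro δ ⟨hδ, x, hx⟩
    exact hst.1 δ hδ ⟨idMor x, hx, x, rfl⟩
  have transfer : ∀ {σ' τ' μ' : Set (Mor C)}, σ' ∈ A.part → τ' ∈ A.part → μ' ∈ A.part →
      ∀ {p q : Mor C}, p ∈ μ' → q ∈ μ' → (compFiber σ' τ' p).Nonempty →
      (compFiber σ' τ' q).Nonempty := by
    intro σ' τ' μ' h1 h2 h3 p q hp hq hh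
    obtain ⟨pr, hpr⟩ := hh
    obtain ⟨e⟩ := A.concat σ' h1 τ' h2 μ' h3 p hp q hq
    exact ⟨(e ⟨pr, hpr⟩).1, (e ⟨pr, hpr⟩).2⟩
  have idsrc : ∀ {δ ε : Set (Mor C)}, structEq δ ε δ 1 → ε ∈ S0 A.part →
      ∀ {p : Mor C}, p ∈ δ → idMor p.1 ∈ ε := by
    intro δ ε h hε p hp
    obtain ⟨⟨⟨a, b⟩, ha, hb, hab⟩⟩ := (Nat.card_eq_one_iff_unique.mp (h p hp)).2
    obtain ⟨-, hbid⟩ := aux_of_id_left (hJ0 hε hb) hab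
    exact hbid ▸ hb
  have idtgt : ∀ {δ ε : Set (Mor C)}, structEq ε δ δ 1 → ε ∈ S0 A.part →
      ∀ {p : Mor C}, p ∈ δ → idMor p.2.1 ∈ ε := by
    intro δ ε h hε p hp
    obtain ⟨⟨⟨a, b⟩, ha, hb, hab⟩⟩ := (Nat.card_eq_one_iff_unique.mp (h p hp)).2
    obtain ⟨-, haid⟩ := aux_of_id_right (hJ0 hε ha) hab
    exact haid ▸ ha
  have hσB : ∀ {p : Mor C}, p ∈ σ → idMor p.2.1 ∈ β := fun hp => idtgt hσ2 hβ hp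
  have hτB : ∀ {p : Mor C}, p ∈ τ → idMor p.1 ∈ β := fun hp => idsrc hτ1 hβ hp
  have hτC : ∀ {p : Mor C}, p ∈ τ → idMor p.2.1 ∈ γ := fun hp => idtgt hτ2 hγ hp
  have hσA : ∀ {p : Mor C}, p ∈ σ → idMor p.1 ∈ α := fun hp => idsrc hσ1 hα hp
  -- existence of a τ-element at a given β-point
  have Eτ : ∀ x : C, idMor x ∈ β → ∃ g ∈ τ, g.1 = x := by
    intro x hx
    obtain ⟨g0, hg0⟩ := hne τ hτP
    have hfib : (compFiber (morInv '' τ) τ (idMor g0.1)).Nonempty :=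
      ⟨(morInv g0, g0), ⟨g0, hg0, rfl⟩, hg0, aux_isComp_inv g0⟩
    obtain ⟨⟨a, b⟩, ha, hb, hab⟩ :=
      transfer (hinvP τ hτP) hτP hβ.1 (hτB hg0) hx hfib
    exact ⟨b, hb, aux_isComp_src hab⟩
  -- choose a composable pair and the class of its composite
  obtain ⟨f0, hf0⟩ := hne σ hσP
  obtain ⟨g0, hg0, hg0src⟩ := Eτ f0.2.1 (hσB hf0)
  have hcomp0 : IsComp g0 f0 (morComp f0 g0 hg0src.symm) :=
    aux_isComp_morComp f0 g0 hg0src.symm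
  obtain ⟨μ, ⟨hμP, hμh0⟩, -⟩ := hPart.2 (morComp f0 g0 hg0src.symm)
  -- crux: every composite of an element of σ with an element of τ lies in μ
  have crux : ∀ {s t m : Mor C}, s ∈ σ → t ∈ τ → IsComp t s m → m ∈ μ := by
    intro s t m hs ht hcomp
    obtain ⟨ν, ⟨hνP, hνm⟩, -⟩ := hPart.2 m
    have hfib : (compFiber ν (morInv '' σ) t).Nonempty :=
      ⟨(m, morInv s), hνm, ⟨s, hs, rfl⟩, aux_isComp_inv_left hcomp⟩
    obtain ⟨⟨a, b⟩, ha, hb, hab⟩ := transfer hνP (hinvP σ hσP) hτP ht hg0 hfib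
    obtain ⟨f1, hf1, rfl⟩ := hb
    have hf10 : f1 = f0 := by
      refine hthin_tgt σ hσP hf1 hf0 ?_
      have h1 : f1.2.1 = g0.1 := aux_isComp_src hab
      exact h1.trans hg0src
    subst hf10
    have h2 : IsComp g0 f1 a := aux_isComp_inv_left' hab
    have h3 : a = morComp f1 g0 hg0src.symm := aux_m_unique h2 hcomp0
    have hν : ν = μ := hcls hνP hμP (h3 ▸ ha) hμh0
    exact hν ▸ hνm
  have key1 : structEq τ σ μ 1 := by
    intro m hm
    rw [Nat.card_eq_one_iff_unique]
    constructor
    · refine ⟨?_⟩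
      rintro ⟨⟨a, b⟩, ha, hb, hab⟩ ⟨⟨a', b'⟩, ha', hb', hab'⟩
      have hb2 : b = b' :=
        hthin_src σ hσP hb hb' ((aux_isComp_src hab).trans (aux_isComp_src hab').symm)
      subst hb2
      have ha2 : a = a' := aux_cancel hab hab'
      subst ha2
      rfl
    · have hfib0 : (compFiber τ σ (morComp f0 g0 hg0src.symm)).Nonempty :=
        ⟨(g0, f0), hg0, hf0, hcomp0⟩
      obtain ⟨p, hp⟩ := transfer hτP hσP hμP hμh0 hm hfib0
      exact ⟨⟨p, hp⟩⟩
  have hμhom : μ ∈ hom2 A.part α γ := by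
    refine ⟨hμP, ?_, ?_⟩
    · intro m hm
      have hsrc : idMor m.1 ∈ α := by
        obtain ⟨⟨⟨a, b⟩, ha, hb, hab⟩⟩ := (Nat.card_eq_one_iff_unique.mp (key1 m hm)).2
        have h4 := hσA hb
        rwa [aux_isComp_src hab] at h4
      rw [Nat.card_eq_one_iff_unique]
      constructor
      · refine ⟨?_⟩
        rintro ⟨⟨a, b⟩, ha, hb, hab⟩ ⟨⟨a', b'⟩, ha', hb', hab'⟩
        obtain ⟨h1, h2⟩ := aux_of_id_left (hJ0 hα hb) hab
        obtain ⟨h1', h2'⟩ := aux_of_id_left (hJ0 hα hb') hab'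
        exact Subtype.ext (by rw [Prod.ext_iff]; exact ⟨h1.trans h1'.symm, h2.trans h2'.symm⟩)
      · exact ⟨⟨(m, idMor m.1), hm, hsrc, aux_isComp_id_left m⟩⟩
    · intro m hm
      have htgt : idMor m.2.1 ∈ γ := by
        obtain ⟨⟨⟨a, b⟩, ha, hb, hab⟩⟩ := (Nat.card_eq_one_iff_unique.mp (key1 m hm)).2
        have h4 := hτC ha
        rwa [aux_isComp_tgt hab] at h4
      rw [Nat.card_eq_one_iff_unique]
      constructor
      · refine ⟨?_⟩
        rintro ⟨⟨a, b⟩, ha, hb, hab⟩ ⟨⟨a', b'⟩, ha', hb', hab'⟩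
        obtain ⟨h1, h2⟩ := aux_of_id_right (hJ0 hγ ha) hab
        obtain ⟨h1', h2'⟩ := aux_of_id_right (hJ0 hγ ha') hab'
        exact Subtype.ext (by rw [Prod.ext_iff]; exact ⟨h2.trans h2'.symm, h1.trans h1'.symm⟩)
      · exact ⟨⟨(idMor m.2.1, m), htgt, hm, aux_isComp_id_right m⟩⟩
  refine ⟨μ, hμhom, key1, ?_, ?_⟩
  · intro μ'' hμ'' hstr
    obtain ⟨m, hm⟩ := hne μ'' hμ''.1
    obtain ⟨⟨⟨a, b⟩, ha, hb, hab⟩⟩ := (Nat.card_eq_one_iff_unique.mp (hstr m hm)).2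
    exact hcls hμ''.1 hμP hm (crux hb ha hab)
  · intro μ' hμ' hner m hm
    have hempty : compFiber τ σ m = ∅ := by
      ext ⟨a, b⟩
      simp only [Set.mem_empty_iff_false, iff_false]
      rintro ⟨ha, hb, hab⟩
      exact hner (hcls hμ' hμP hm (crux hb ha hab))
    rw [hempty]
    simp
end

section
/- Let (C,S,T) be a semi-thin association schemoid, α, β, γ ∈ S₀, σ ∈ _αS_β and τ ∈ _βS_γ, and let τ∘σ denote the unique element μ of _αS_γ with p^μ_{τσ} = 1. If f ∈ σ, g ∈ τ and t(f) = s(g), then g∘f ∈ τ∘σ. -/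
open CategoryTheory

universe v u

universe v₂ u₂

private lemma mor_mk_inj {C : Type u} [Category.{v} C] {x y : C} {f g : x ⟶ y}
    (h : (⟨x, y, f⟩ : Mor C) = ⟨x, y, g⟩) : f = g := by
  simpa using h

/-- Lemma 4.5 of Kuribayashi–Matsuo: if `σ ∈ _αS_β`, `τ ∈ _βS_γ`, `f ∈ σ`, `g ∈ τ` and
`t(f) = s(g)`, then `g ∘ f` lies in the class `τ∘σ`, i.e. in the unique `μ ∈ _αS_γ`
with `p^μ_{τσ} = 1`. -/
theorem comp_mem_composition_class
    {C : Type u} [Groupoid.{v} C] (A : AssnSchemoid C) (hst : IsSemiThin A)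
    {α β γ σ τ μ : Set (Mor C)} (hα : α ∈ S0 A.part) (hβ : β ∈ S0 A.part)
    (hγ : γ ∈ S0 A.part)
    (hσ : σ ∈ hom2 A.part α β) (hτ : τ ∈ hom2 A.part β γ)
    (hμ : μ ∈ hom2 A.part α γ) (hμ1 : structEq τ σ μ 1)
    (f g : Mor C) (hf : f ∈ σ) (hg : g ∈ τ) (hcomp : Mor.tgt f = Mor.src g) :
    ∀ m : Mor C, IsComp g f m → m ∈ μ := by
  intro m hm
  obtain ⟨x, y, z, f1, g1, rfl, rfl, rfl⟩ := hm
  have hσS : σ ∈ A.part := hσ.1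
  have hτS : τ ∈ A.part := hτ.1
  have hμS : μ ∈ A.part := hμ.1
  have hσsS : A.T.onMor '' σ ∈ A.part := A.T_part σ hσS
  have hμne : μ.Nonempty := by
    rw [Set.nonempty_iff_ne_empty]
    rintro rfl
    exact A.isPartition.1 hμS
  obtain ⟨m0, hm0⟩ := hμne
  have h1 : Nat.card (compFiber τ σ m0) = 1 := hμ1 m0 hm0
  have hne : Nonempty (compFiber τ σ m0) := by
    have hpos : 0 < Nat.card (compFiber τ σ m0) := by omega
    exact (Nat.card_pos_iff.mp hpos).1
  obtain ⟨⟨g0, f0⟩, hg0, hf0, hc0⟩ := hne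
  obtain ⟨x0, y0, z0, f0', g0', rfl, rfl, rfl⟩ := hc0
  -- the fiber of `g0'` under `π_{μ σ*}` is nonempty
  have hinv0 : mk3 (Groupoid.inv f0') ∈ A.T.onMor '' σ := by
    have h := Set.mem_image_of_mem A.T.onMor hf0
    rwa [hst.2.2] at h
  have hfib0 : (mk3 (f0' ≫ g0'), mk3 (Groupoid.inv f0')) ∈
      compFiber μ (A.T.onMor '' σ) (mk3 g0') := by
    refine ⟨hm0, hinv0, y0, x0, z0, Groupoid.inv f0', f0' ≫ g0', rfl, rfl, ?_⟩
    rw [← Category.assoc, Groupoid.inv_comp, Category.id_comp]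
  obtain ⟨e⟩ := A.concat μ hμS (A.T.onMor '' σ) hσsS τ hτS (mk3 g0') hg0 (mk3 g1) hg
  obtain ⟨⟨a, b⟩, haμ, hbσs, hab⟩ := e ⟨_, hfib0⟩
  obtain ⟨x2, y2, z2, f2, g2, rfl, rfl, habE⟩ := hab
  have hx2 : y = x2 := congrArg (fun p => p.1) habE
  subst hx2
  -- `b` must be the inverse of `f`
  have hinv1 : mk3 (Groupoid.inv f1) ∈ A.T.onMor '' σ := by
    have h := Set.mem_image_of_mem A.T.onMor hf
    rwa [hst.2.2] at h
  have hbb : (mk3 f2 : Mor C) = mk3 (Groupoid.inv f1) :=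
    hst.2.1 _ hσsS y ⟨hbσs, rfl⟩ ⟨hinv1, rfl⟩
  have hy2 : y2 = x := congrArg (fun p => p.2.1) hbb
  subst hy2
  have hbb2 : f2 = Groupoid.inv f1 := mor_mk_inj hbb
  subst hbb2
  have hz2 : z = z2 := congrArg (fun p => p.2.1) habE
  subst hz2
  have habE2 : g1 = Groupoid.inv f1 ≫ g2 := mor_mk_inj habE
  have hg2 : g2 = f1 ≫ g1 := by
    rw [habE2, ← Category.assoc, Groupoid.comp_inv, Category.id_comp]
  rw [hg2] at haμ
  exact haμ
end

section
/- Let D₊ → E →(q) C be a linear extension of a small category C and let (C,S) be a quasi-schemoid. Assume that for every morphism f in C the homomorphisms f_* and f^* are invertible, and that D_{1_{s(f)}} ≅ D_{1_{s(g)}} for every σ ∈ S and all f, g ∈ σ. Then E admits a unique quasi-schemoid structure (E,S̃) for which q is a morphism of quasi-schemoids that is injective on the partition of mor(E); namely S̃ = {q⁻¹(σ)}_{σ ∈ S}. -/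
open CategoryTheory

universe v u

universe v₂ u₂

/-- The category of factorizations `F(C)` : objects are the morphisms of `C`, and a
morphism `f → g` is a pair `(α,β)` with `α ∘ f ∘ β = g`. -/
def FactCat (C : Type u) [Category.{v} C] : Type max u v := Mor C

/-- Reinterpret an element of `Mor C` as an object of `F(C)`. -/
def toFactCat {C : Type u} [Category.{v} C] (m : Mor C) : FactCat C := m

/-- Reinterpret an object of `F(C)` as an element of `Mor C`. -/
def FactCat.toMor {C : Type u} [Category.{v} C] (m : FactCat C) : Mor C := m

instance FactCat.category (C : Type u) [Category.{v} C] : Category (FactCat C) where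
  Hom f g :=
    {p : (g.toMor.1 ⟶ f.toMor.1) × (f.toMor.2.1 ⟶ g.toMor.2.1) //
      p.1 ≫ f.toMor.2.2 ≫ p.2 = g.toMor.2.2}
  id f := ⟨(𝟙 _, 𝟙 _), by simp⟩
  comp {f g h} p q := ⟨(q.1.1 ≫ p.1.1, p.1.2 ≫ q.1.2), by
    calc (q.1.1 ≫ p.1.1) ≫ f.toMor.2.2 ≫ (p.1.2 ≫ q.1.2)
        = q.1.1 ≫ (p.1.1 ≫ f.toMor.2.2 ≫ p.1.2) ≫ q.1.2 := by simp
      _ = q.1.1 ≫ g.toMor.2.2 ≫ q.1.2 := by rw [p.2]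
      _ = h.toMor.2.2 := q.2⟩
  id_comp p := by apply Subtype.ext; simp
  comp_id p := by apply Subtype.ext; simp
  assoc p q r := by apply Subtype.ext; simp

/-- The abelian group `D_m` associated by a natural system `N : F(C) → Ab` to a
morphism `m`. -/
def elN {C : Type u} [Category.{v} C] (N : FactCat C ⥤ AddCommGrpCat.{w}) (m : Mor C) :
    Type w :=
  N.obj (toFactCat m)

noncomputable instance elN.addCommGroup {C : Type u} [Category.{v} C]
    (N : FactCat C ⥤ AddCommGrpCat.{w}) (m : Mor C) : AddCommGroup (elN N m) :=
  inferInstanceAs (AddCommGroup (N.obj (toFactCat m)))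

/-- The morphism `(f, 1) : g → g ≫ f` of `F(C)` inducing `f_*`. -/
def factPushHom {C : Type u} [Category.{v} C] {x y z : C} (g : x ⟶ y) (f : y ⟶ z) :
    toFactCat (mk3 g) ⟶ toFactCat (mk3 (g ≫ f)) :=
  ⟨(𝟙 x, f), by simp [toFactCat, FactCat.toMor, mk3]⟩

/-- The morphism `(1, g) : f → g ≫ f` of `F(C)` inducing `g^*`. -/
def factPullHom {C : Type u} [Category.{v} C] {x y z : C} (g : x ⟶ y) (f : y ⟶ z) :
    toFactCat (mk3 f) ⟶ toFactCat (mk3 (g ≫ f)) :=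
  ⟨(g, 𝟙 z), by simp [toFactCat, FactCat.toMor, mk3]⟩

/-- `f_* : D_g → D_{f∘g}` (post-composition by `f`). -/
def fpush {C : Type u} [Category.{v} C] (N : FactCat C ⥤ AddCommGrpCat.{w}) {x y z : C}
    (g : x ⟶ y) (f : y ⟶ z) : elN N (mk3 g) → elN N (mk3 (g ≫ f)) :=
  fun a => N.map (factPushHom g f) a

/-- `g^* : D_f → D_{f∘g}` (pre-composition by `g`). -/
def fpull {C : Type u} [Category.{v} C] (N : FactCat C ⥤ AddCommGrpCat.{w}) {x y z : C}
    (g : x ⟶ y) (f : y ⟶ z) : elN N (mk3 f) → elN N (mk3 (g ≫ f)) :=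
  fun a => N.map (factPullHom g f) a

/-- Transport in the coefficients of a natural system along an equality of morphisms. -/
def elCast {C : Type u} [Category.{v} C] (N : FactCat C ⥤ AddCommGrpCat.{w}) {x y : C}
    {f g : x ⟶ y} (h : f = g) (a : elN N (mk3 f)) : elN N (mk3 g) := by
  subst h; exact a

/-- A linear extension `D₊ → E → C` of a small category `C` by a natural system
`N : F(C) → Ab` (Definition 5.1 of Kuribayashi–Matsuo, after Baues–Wirsching):
`E` has the same objects as `C`, `q` is a full functor which is the identity on
objects, each `D_f` acts transitively and effectively on `q⁻¹(f)`, and the linear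
distributivity law holds. -/
structure LinExt (C : Type u) [Category.{v} C]
    (N : FactCat C ⥤ AddCommGrpCat.{w}) where
  hom : C → C → Type w
  id' : ∀ x : C, hom x x
  comp' : ∀ {x y z : C}, hom x y → hom y z → hom x z
  id_comp' : ∀ {x y : C} (e : hom x y), comp' (id' x) e = e
  comp_id' : ∀ {x y : C} (e : hom x y), comp' e (id' y) = e
  assoc' : ∀ {w x y z : C} (a : hom w x) (b : hom x y) (c : hom y z),
    comp' (comp' a b) c = comp' a (comp' b c)
  /-- the projection `q`, identity on objects -/
  q : ∀ {x y : C}, hom x y → (x ⟶ y)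
  q_id : ∀ x : C, q (id' x) = 𝟙 x
  q_comp : ∀ {x y z : C} (e : hom x y) (e' : hom y z), q (comp' e e') = q e ≫ q e'
  /-- `q` is full -/
  q_surj : ∀ {x y : C} (f : x ⟶ y), ∃ e : hom x y, q e = f
  /-- the action of `D_f` on `q⁻¹(f)`, written `e + a` -/
  act : ∀ {x y : C} (e : hom x y), elN N (mk3 (q e)) → hom x y
  act_q : ∀ {x y : C} (e : hom x y) (a : elN N (mk3 (q e))), q (act e a) = q e
  act_zero : ∀ {x y : C} (e : hom x y), act e 0 = e
  act_add : ∀ {x y : C} (e : hom x y) (a b : elN N (mk3 (q e))),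
    act (act e a) (elCast N (act_q e a).symm b) = act e (a + b)
  /-- transitivity of the action on fibers of `q` -/
  act_trans : ∀ {x y : C} (e e' : hom x y) (h : q e = q e'),
    ∃ a : elN N (mk3 (q e)), act e a = e'
  /-- effectiveness (freeness) of the action -/
  act_free : ∀ {x y : C} (e : hom x y) (a : elN N (mk3 (q e))), act e a = e → a = 0
  /-- the linear distributivity law `(f₀+α)(g₀+β) = f₀g₀ + f_*β + g^*α` -/
  distrib : ∀ {x y z : C} (g₀ : hom x y) (f₀ : hom y z)
    (β : elN N (mk3 (q g₀))) (α : elN N (mk3 (q f₀))),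
    comp' (act g₀ β) (act f₀ α) =
      act (comp' g₀ f₀)
        (elCast N (q_comp g₀ f₀).symm
          (fpush N (q g₀) (q f₀) β + fpull N (q g₀) (q f₀) α))

/-- The total category `E` of a linear extension. -/
def LinExt.Carrier {C : Type u} [Category.{v} C]
    {N : FactCat C ⥤ AddCommGrpCat.{w}} (_ : LinExt C N) : Type u := C

instance LinExt.category {C : Type u} [Category.{v} C]
    {N : FactCat C ⥤ AddCommGrpCat.{w}} (L : LinExt C N) : Category L.Carrier where
  Hom x y := L.hom x y
  id x := L.id' x
  comp e e' := L.comp' e e'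
  id_comp e := L.id_comp' e
  comp_id e := L.comp_id' e
  assoc a b c := L.assoc' a b c

/-- The projection functor `q : E ⥤ C` of a linear extension. -/
def LinExt.qFunctor {C : Type u} [Category.{v} C]
    {N : FactCat C ⥤ AddCommGrpCat.{w}} (L : LinExt C N) : L.Carrier ⥤ C where
  obj x := x
  map e := L.q e
  map_id x := L.q_id x
  map_comp e e' := L.q_comp e e'

/-- The partition `S̃ = {q⁻¹(σ)}_{σ ∈ S}` of `mor E`. -/
def preimagePart {C : Type u} [Category.{v} C] {N : FactCat C ⥤ AddCommGrpCat.{w}}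
    (L : LinExt C N) (S : Set (Set (Mor C))) : Set (Set (Mor L.Carrier)) :=
  {s | ∃ σ ∈ S, s = morMap L.qFunctor ⁻¹' σ}

/-- A proper morphism of quasi-schemoids: a morphism which is injective on the
partitions. -/
def IsProperQSMor {C : Type u} {D : Type u₂} [Category.{v} C] [Category.{v₂} D]
    (SC : Set (Set (Mor C))) (SD : Set (Set (Mor D))) (F : C ⥤ D) : Prop :=
  IsQSMor SC SD F ∧
    ∀ σ₁ ∈ SC, ∀ σ₂ ∈ SC, ∀ τ ∈ SD,
      morMap F '' σ₁ ⊆ τ → morMap F '' σ₂ ⊆ τ → σ₁ = σ₂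

section KMProof

universe w₃

variable {C : Type u} [Category.{v} C]

lemma KM.mk3_inj {x y : C} {f g : x ⟶ y} (h : mk3 f = mk3 g) : f = g := by
  have h' : (⟨x, ⟨y, f⟩⟩ : Σ x : C, Σ y : C, x ⟶ y) = ⟨x, ⟨y, g⟩⟩ := h
  simpa using h'

lemma KM.mor_inj {A : Type u₂} [Category.{v₂} A] {x y x' y' : A} {f : x ⟶ y}
    {f' : x' ⟶ y'}
    (h : (⟨x, ⟨y, f⟩⟩ : Σ a : A, Σ b : A, a ⟶ b) = ⟨x', ⟨y', f'⟩⟩) :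
    x = x' ∧ y = y' ∧ HEq f f' := by
  injection h with h1 h2
  subst h1
  injection eq_of_heq h2 with h3 h4
  subst h3
  exact ⟨rfl, rfl, h4⟩

lemma KM.isComp_morMap {D : Type u₂} [Category.{v₂} D] (F : C ⥤ D) {a b m : Mor C}
    (h : IsComp a b m) : IsComp (morMap F a) (morMap F b) (morMap F m) := by
  obtain ⟨x, y, z, f, g, rfl, rfl, rfl⟩ := h
  exact ⟨F.obj x, F.obj y, F.obj z, F.map f, F.map g, rfl, rfl, by
    simp [morMap, mk3]; rfl⟩

variable (N : FactCat C ⥤ AddCommGrpCat.{w₃})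

lemma KM.elCast_zero {x y : C} {f g : x ⟶ y} (h : f = g) :
    elCast N h (0 : elN N (mk3 f)) = 0 := by subst h; rfl

lemma KM.elCast_eq_zero_iff {x y : C} {f g : x ⟶ y} (h : f = g) (a : elN N (mk3 f)) :
    elCast N h a = 0 ↔ a = 0 := by subst h; exact Iff.rfl

lemma KM.elCast_elCast {x y : C} {f g : x ⟶ y} (h : f = g) (a : elN N (mk3 f)) :
    elCast N h.symm (elCast N h a) = a := by subst h; rfl

def KM.elCastEquiv {x y : C} {f g : x ⟶ y} (h : f = g) :
    elN N (mk3 f) ≃ elN N (mk3 g) := by subst h; exact Equiv.refl _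

lemma KM.fpull_zero {x y z : C} (g : x ⟶ y) (f : y ⟶ z) :
    fpull N g f (0 : elN N (mk3 f)) = 0 := by
  show (N.map (factPullHom g f)) (0 : N.obj _) = 0
  exact map_zero _

variable {N}

lemma KM.act_inj (L : LinExt C N) {x y : C} (e : L.hom x y)
    {a b : elN N (mk3 (L.q e))} (h : L.act e a = L.act e b) : a = b := by
  have h1 := L.act_add e b (a - b)
  have hab : b + (a - b) = a := by abel
  rw [hab, h] at h1
  have h2 := L.act_free _ _ h1
  have h3 := (KM.elCast_eq_zero_iff N (L.act_q e b).symm (a - b)).mp h2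
  exact sub_eq_zero.mp h3

/-- Pairs of lifts of `f` and `g` composing to `e`. -/
def KM.LiftPairs (L : LinExt C N) {x y z : C} (f : x ⟶ y) (g : y ⟶ z)
    (e : L.hom x z) : Type w₃ :=
  {p : L.hom x y × L.hom y z // L.q p.1 = f ∧ L.q p.2 = g ∧ L.comp' p.1 p.2 = e}

lemma KM.liftPairs_nonempty (L : LinExt C N)
    (hinv : ∀ {x y z : C} (g : x ⟶ y) (f : y ⟶ z),
      Function.Bijective (fpush N g f) ∧ Function.Bijective (fpull N g f))
    {x y z : C} (f : x ⟶ y) (g : y ⟶ z) (e : L.hom x z) (he : L.q e = f ≫ g) :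
    Nonempty (KM.LiftPairs L f g e) := by
  obtain ⟨u₁, hu₁⟩ := L.q_surj f
  obtain ⟨v₁, hv₁⟩ := L.q_surj g
  have hqc : L.q (L.comp' u₁ v₁) = L.q e := by rw [L.q_comp, hu₁, hv₁, he]
  obtain ⟨γ, hγ⟩ := L.act_trans (L.comp' u₁ v₁) e hqc
  obtain ⟨β₀, hβ₀⟩ := (hinv (L.q u₁) (L.q v₁)).1.2 (elCast N (L.q_comp u₁ v₁) γ)
  refine ⟨⟨(L.act u₁ β₀, v₁), by rw [L.act_q]; exact hu₁, hv₁, ?_⟩⟩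
  have hd := L.distrib u₁ v₁ β₀ 0
  rw [L.act_zero] at hd
  rw [hd, hβ₀, KM.fpull_zero, add_zero, KM.elCast_elCast]
  exact hγ

lemma KM.baseEquiv (L : LinExt C N)
    (hinv : ∀ {x y z : C} (g : x ⟶ y) (f : y ⟶ z),
      Function.Bijective (fpush N g f) ∧ Function.Bijective (fpull N g f))
    {x y z : C} (u₀ : L.hom x y) (v₀ : L.hom y z) :
    Nonempty (KM.LiftPairs L (L.q u₀) (L.q v₀) (L.comp' u₀ v₀) ≃
      elN N (mk3 (L.q v₀))) := by
  let fpE : elN N (mk3 (L.q u₀)) ≃ elN N (mk3 (L.q u₀ ≫ L.q v₀)) :=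
    Equiv.ofBijective _ (hinv (L.q u₀) (L.q v₀)).1
  let B : elN N (mk3 (L.q v₀)) → elN N (mk3 (L.q u₀)) :=
    fun α => fpE.symm (-(fpull N (L.q u₀) (L.q v₀) α))
  have hB : ∀ α, fpush N (L.q u₀) (L.q v₀) (B α) = -(fpull N (L.q u₀) (L.q v₀) α) :=
    fun α => fpE.apply_symm_apply _
  let Ψ : elN N (mk3 (L.q v₀)) → KM.LiftPairs L (L.q u₀) (L.q v₀) (L.comp' u₀ v₀) :=
    fun α => ⟨(L.act u₀ (B α), L.act v₀ α), L.act_q _ _, L.act_q _ _, by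
      rw [L.distrib u₀ v₀ (B α) α, hB α, neg_add_cancel, KM.elCast_zero, L.act_zero]⟩
  have hΨ : Function.Bijective Ψ := by
    constructor
    · intro α α' h
      have h2 : L.act v₀ α = L.act v₀ α' := congrArg (fun t => t.1.2) h
      exact KM.act_inj L v₀ h2
    · rintro ⟨⟨u, v⟩, hu, hv, huv⟩
      obtain ⟨α, hα⟩ := L.act_trans v₀ v hv.symm
      obtain ⟨β, hβ⟩ := L.act_trans u₀ u hu.symm
      have hcomp : L.comp' (L.act u₀ β) (L.act v₀ α) = L.comp' u₀ v₀ := by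
        rw [hα, hβ]; exact huv
      rw [L.distrib] at hcomp
      have h0 := L.act_free _ _ hcomp
      have h1 := (KM.elCast_eq_zero_iff N _ _).mp h0
      have h2 : fpush N (L.q u₀) (L.q v₀) β = -(fpull N (L.q u₀) (L.q v₀) α) :=
        eq_neg_of_add_eq_zero_left h1
      have h3 : β = B α := by
        apply (hinv (L.q u₀) (L.q v₀)).1.1
        rw [h2]
        exact (hB α).symm
      refine ⟨α, ?_⟩
      apply Subtype.ext
      show (L.act u₀ (B α), L.act v₀ α) = (u, v)
      rw [← h3, hβ, hα]
  exact ⟨(Equiv.ofBijective Ψ hΨ).symm⟩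

lemma KM.liftPairsEquiv (L : LinExt C N)
    (hinv : ∀ {x y z : C} (g : x ⟶ y) (f : y ⟶ z),
      Function.Bijective (fpush N g f) ∧ Function.Bijective (fpull N g f))
    {x y z : C} (f : x ⟶ y) (g : y ⟶ z) (e : L.hom x z) (he : L.q e = f ≫ g) :
    Nonempty (KM.LiftPairs L f g e ≃ elN N (mk3 g)) := by
  obtain ⟨⟨⟨u₀, v₀⟩, hu₀, hv₀, h₀⟩⟩ := KM.liftPairs_nonempty L hinv f g e he
  subst hu₀; subst hv₀; subst h₀
  exact KM.baseEquiv L hinv u₀ v₀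

lemma KM.morMap_qFunctor (L : LinExt C N) (m : Mor L.Carrier) :
    morMap L.qFunctor m = ⟨m.1, m.2.1, L.q m.2.2⟩ := rfl

/-- The projection from the fiber in `E` to the fiber in `C`. -/
def KM.Phi (L : LinExt C N) (σ τ : Set (Mor C)) {x z : C} (e : L.hom x z)
    (w : (compFiber (morMap L.qFunctor ⁻¹' σ) (morMap L.qFunctor ⁻¹' τ)
      (⟨x, z, e⟩ : Mor L.Carrier) : Set (Mor L.Carrier × Mor L.Carrier))) :
    (compFiber σ τ (⟨x, z, L.q e⟩ : Mor C) : Set (Mor C × Mor C)) :=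
  ⟨(morMap L.qFunctor w.1.1, morMap L.qFunctor w.1.2),
    w.2.1, w.2.2.1, KM.isComp_morMap L.qFunctor w.2.2.2⟩

lemma KM.fiberEquiv' (L : LinExt C N)
    (hinv : ∀ {x y z : C} (g : x ⟶ y) (f : y ⟶ z),
      Function.Bijective (fpush N g f) ∧ Function.Bijective (fpull N g f))
    (σ τ : Set (Mor C)) {x y z : C} (e : L.hom x z) (fc : x ⟶ y) (gc : y ⟶ z)
    (hqe : L.q e = fc ≫ gc)
    (hmem : (mk3 gc, mk3 fc) ∈ compFiber σ τ (⟨x, z, L.q e⟩ : Mor C)) :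
    Nonempty ({w // KM.Phi L σ τ e w = ⟨(mk3 gc, mk3 fc), hmem⟩} ≃ elN N (mk3 gc)) := by
  obtain ⟨E₁⟩ := KM.liftPairsEquiv L hinv fc gc e hqe
  have ha : mk3 gc ∈ σ := hmem.1
  have hb : mk3 fc ∈ τ := hmem.2.1
  have hval : ∀ (P : KM.LiftPairs L fc gc e),
      morMap L.qFunctor (mk3 P.1.2) = mk3 gc ∧ morMap L.qFunctor (mk3 P.1.1) = mk3 fc := by
    intro P
    constructor
    · show mk3 (L.q P.1.2) = mk3 gc
      rw [P.2.2.1]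
    · show mk3 (L.q P.1.1) = mk3 fc
      rw [P.2.1]
  let θ : KM.LiftPairs L fc gc e →
      {w // KM.Phi L σ τ e w = ⟨(mk3 gc, mk3 fc), hmem⟩} := fun P =>
    ⟨⟨(mk3 P.1.2, mk3 P.1.1),
      by show morMap L.qFunctor (mk3 P.1.2) ∈ σ; rw [(hval P).1]; exact ha,
      by show morMap L.qFunctor (mk3 P.1.1) ∈ τ; rw [(hval P).2]; exact hb,
      ⟨x, y, z, P.1.1, P.1.2, rfl, rfl,
        congrArg (fun t => (⟨x, z, t⟩ : Mor L.Carrier)) P.2.2.2.symm⟩⟩,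
      by
        apply Subtype.ext
        show (morMap L.qFunctor (mk3 P.1.2), morMap L.qFunctor (mk3 P.1.1))
          = (mk3 gc, mk3 fc)
        rw [(hval P).1, (hval P).2]⟩
  have hθ : Function.Bijective θ := by
    constructor
    · intro P P' h
      have h0 : ((mk3 (x := y) (y := z) P.1.2 : Mor L.Carrier),
            (mk3 (x := x) (y := y) P.1.1 : Mor L.Carrier)) =
          ((mk3 (x := y) (y := z) P'.1.2 : Mor L.Carrier),
            (mk3 (x := x) (y := y) P'.1.1 : Mor L.Carrier)) :=
        congrArg (fun t => t.1.1) h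
      have e1 : (mk3 (x := x) (y := y) P.1.1 : Mor L.Carrier) =
          (mk3 (x := x) (y := y) P'.1.1 : Mor L.Carrier) := congrArg Prod.snd h0
      have e2 : (mk3 (x := y) (y := z) P.1.2 : Mor L.Carrier) =
          (mk3 (x := y) (y := z) P'.1.2 : Mor L.Carrier) := congrArg Prod.fst h0
      apply Subtype.ext
      exact Prod.ext (KM.mk3_inj e1) (KM.mk3_inj e2)
    · rintro ⟨⟨ab, hab⟩, hphi⟩
      obtain ⟨x₂, y₂, z₂, ft, gt, hbb2, haa2, hm2⟩ := hab.2.2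
      have hm2' : (⟨x, ⟨z, e⟩⟩ : Σ x : L.Carrier, Σ y : L.Carrier, x ⟶ y)
          = ⟨x₂, ⟨z₂, ft ≫ gt⟩⟩ := hm2
      obtain ⟨k1, k3, k4⟩ := KM.mor_inj hm2'
      subst k1; subst k3
      have he2 : e = L.comp' ft gt := eq_of_heq k4
      have hv := congrArg (fun t => t.1.1) hphi
      have hv1 : (morMap L.qFunctor ab.1 : Mor C) = mk3 gc := hv
      rw [haa2] at hv1
      have hv1' : (⟨y₂, ⟨z, L.q gt⟩⟩ : Σ x : C, Σ y : C, x ⟶ y) = ⟨y, ⟨z, gc⟩⟩ := hv1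
      obtain ⟨m1, -, m3⟩ := KM.mor_inj hv1'
      subst m1
      have hqgt : L.q gt = gc := eq_of_heq m3
      have hv' := congrArg (fun t => t.1.2) hphi
      have hv2 : (morMap L.qFunctor ab.2 : Mor C) = mk3 fc := hv'
      rw [hbb2] at hv2
      have hv2' : (⟨x, ⟨y₂, L.q ft⟩⟩ : Σ x : C, Σ y : C, x ⟶ y) = ⟨x, ⟨y₂, fc⟩⟩ := hv2
      obtain ⟨-, -, n3⟩ := KM.mor_inj hv2'
      have hqft : L.q ft = fc := eq_of_heq n3
      refine ⟨⟨(ft, gt), hqft, hqgt, he2.symm⟩, ?_⟩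
      apply Subtype.ext
      apply Subtype.ext
      show (mk3 gt, mk3 ft) = ab
      exact Prod.ext haa2.symm hbb2.symm
  exact ⟨(Equiv.ofBijective θ hθ).symm.trans E₁⟩

lemma KM.fiberEquiv (L : LinExt C N)
    (hinv : ∀ {x y z : C} (g : x ⟶ y) (f : y ⟶ z),
      Function.Bijective (fpush N g f) ∧ Function.Bijective (fpull N g f))
    (σ τ : Set (Mor C)) {x z : C} (e : L.hom x z)
    (p : (compFiber σ τ (⟨x, z, L.q e⟩ : Mor C) : Set (Mor C × Mor C))) :
    Nonempty ({w // KM.Phi L σ τ e w = p} ≃ elN N p.1.1) := by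
  obtain ⟨x', y, z', fc, gc, hbb, haa, hm⟩ := p.2.2.2
  have hm' : (⟨x, ⟨z, L.q e⟩⟩ : Σ x : C, Σ y : C, x ⟶ y) = ⟨x', ⟨z', fc ≫ gc⟩⟩ := hm
  injection hm' with h1 h2
  subst h1
  injection eq_of_heq h2 with h3 h4
  subst h3
  have hqe : L.q e = fc ≫ gc := eq_of_heq h4
  have hmem : (mk3 gc, mk3 fc) ∈ compFiber σ τ (⟨x, z, L.q e⟩ : Mor C) := by
    rw [← haa, ← hbb]
    exact p.2
  have hp : p = ⟨(mk3 gc, mk3 fc), hmem⟩ := by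
    apply Subtype.ext
    show p.1 = (mk3 gc, mk3 fc)
    exact Prod.ext haa hbb
  rw [hp]
  exact KM.fiberEquiv' L hinv σ τ e fc gc hqe hmem

lemma KM.preimageFiberEquiv (L : LinExt C N)
    (hinv : ∀ {x y z : C} (g : x ⟶ y) (f : y ⟶ z),
      Function.Bijective (fpush N g f) ∧ Function.Bijective (fpull N g f))
    (σ τ : Set (Mor C)) (m : Mor L.Carrier) :
    Nonempty ((compFiber (morMap L.qFunctor ⁻¹' σ) (morMap L.qFunctor ⁻¹' τ) m :
        Set (Mor L.Carrier × Mor L.Carrier)) ≃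
      Σ p : (compFiber σ τ (morMap L.qFunctor m) : Set (Mor C × Mor C)), elN N p.1.1) := by
  obtain ⟨x, z, e⟩ := m
  exact ⟨(Equiv.sigmaFiberEquiv (KM.Phi L σ τ e)).symm.trans
    (Equiv.sigmaCongrRight fun p => Classical.choice (KM.fiberEquiv L hinv σ τ e p))⟩

lemma KM.classCoeff
    (hinv : ∀ {x y z : C} (g : x ⟶ y) (f : y ⟶ z),
      Function.Bijective (fpush N g f) ∧ Function.Bijective (fpull N g f))
    {σ : Set (Mor C)}
    (hiso' : ∀ a ∈ σ, ∀ a' ∈ σ,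
      Nonempty (elN N (idMor (Mor.src a)) ≃+ elN N (idMor (Mor.src a'))))
    {a a' : Mor C} (ha : a ∈ σ) (ha' : a' ∈ σ) :
    Nonempty ((elN N a : Type w₃) ≃ elN N a') := by
  obtain ⟨I⟩ := hiso' a ha a' ha'
  obtain ⟨x, y, g⟩ := a
  obtain ⟨x', y', g'⟩ := a'
  have E1 : elN N (idMor x) ≃ elN N (mk3 g) :=
    (Equiv.ofBijective _ (hinv (𝟙 x) g).1).trans (KM.elCastEquiv N (Category.id_comp g))
  have E2 : elN N (idMor x') ≃ elN N (mk3 g') :=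
    (Equiv.ofBijective _ (hinv (𝟙 x') g').1).trans (KM.elCastEquiv N (Category.id_comp g'))
  exact ⟨E1.symm.trans (I.toEquiv.trans E2)⟩

end KMProof


/-- Proposition 5.2 of Kuribayashi–Matsuo: let `D₊ → E → C` be a linear extension and
`(C,S)` a quasi-schemoid such that all `f_*`, `f^*` are invertible and
`D_{1_{s(f)}} ≅ D_{1_{s(g)}}` whenever `f, g` belong to the same class of `S`. Then `E`
admits a unique quasi-schemoid structure for which `q` is a proper morphism of
quasi-schemoids, namely `S̃ = {q⁻¹(σ)}_{σ ∈ S}`. -/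
theorem linExt_unique_quasiSchemoid
    {C : Type u} [Category.{v} C] (Q : QuasiSchemoid C)
    (N : FactCat C ⥤ AddCommGrpCat.{w}) (L : LinExt C N)
    (hinv : ∀ {x y z : C} (g : x ⟶ y) (f : y ⟶ z),
      Function.Bijective (fpush N g f) ∧ Function.Bijective (fpull N g f))
    (hiso : ∀ σ ∈ Q.part, ∀ f ∈ σ, ∀ g ∈ σ,
      Nonempty (elN N (idMor (Mor.src f)) ≃+ elN N (idMor (Mor.src g)))) :
    ∃ S' : QuasiSchemoid L.Carrier,
      S'.part = preimagePart L Q.part ∧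
      IsProperQSMor S'.part Q.part L.qFunctor ∧
      ∀ S'' : QuasiSchemoid L.Carrier,
        IsProperQSMor S''.part Q.part L.qFunctor → S''.part = S'.part := by
  classical
  have hsurj : Function.Surjective (morMap L.qFunctor) := by
    rintro ⟨x, y, f⟩
    obtain ⟨e, he⟩ := L.q_surj f
    refine ⟨⟨x, y, e⟩, ?_⟩
    show (⟨x, y, L.q e⟩ : Mor C) = ⟨x, y, f⟩
    rw [he]
  have huniqC : ∀ (m : Mor C) (σ₁ σ₂ : Set (Mor C)), σ₁ ∈ Q.part → σ₂ ∈ Q.part →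
      m ∈ σ₁ → m ∈ σ₂ → σ₁ = σ₂ := by
    intro m σ₁ σ₂ h1 h2 hm1 hm2
    obtain ⟨b, -, hub⟩ := Q.isPartition.2 m
    rw [hub σ₁ ⟨h1, hm1⟩, hub σ₂ ⟨h2, hm2⟩]
  have hne : ∀ σ ∈ Q.part, σ.Nonempty := by
    intro σ hσ
    rcases Set.eq_empty_or_nonempty σ with h | h
    · exact absurd (h ▸ hσ) Q.isPartition.1
    · exact h
  have hpart : Setoid.IsPartition (preimagePart L Q.part) := by
    constructor
    · rintro ⟨σ, hσ, hempty⟩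
      obtain ⟨m, hm⟩ := hne σ hσ
      obtain ⟨w, hw⟩ := hsurj m
      have hw' : w ∈ morMap L.qFunctor ⁻¹' σ := by
        show morMap L.qFunctor w ∈ σ
        rw [hw]; exact hm
      rw [← hempty] at hw'
      exact hw'
    · intro w
      obtain ⟨σ, ⟨hσ, hmσ⟩, huniq⟩ := Q.isPartition.2 (morMap L.qFunctor w)
      refine ⟨morMap L.qFunctor ⁻¹' σ, ⟨⟨σ, hσ, rfl⟩, hmσ⟩, ?_⟩
      rintro s ⟨⟨σ', hσ', rfl⟩, hms⟩
      rw [huniq σ' ⟨hσ', hms⟩]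
  have hconcat : ∀ σt ∈ preimagePart L Q.part, ∀ τt ∈ preimagePart L Q.part,
      ∀ μt ∈ preimagePart L Q.part, ∀ f ∈ μt, ∀ g ∈ μt,
      Nonempty ((compFiber σt τt f : Set (Mor L.Carrier × Mor L.Carrier)) ≃
        (compFiber σt τt g : Set (Mor L.Carrier × Mor L.Carrier))) := by
    rintro _ ⟨σ, hσ, rfl⟩ _ ⟨τ, hτ, rfl⟩ _ ⟨μ, hμ, rfl⟩ f hf g hg
    obtain ⟨F⟩ := Q.concat σ hσ τ hτ μ hμ (morMap L.qFunctor f) hf (morMap L.qFunctor g) hg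
    obtain ⟨Ef⟩ := KM.preimageFiberEquiv L hinv σ τ f
    obtain ⟨Eg⟩ := KM.preimageFiberEquiv L hinv σ τ g
    have coeff : ∀ p : (compFiber σ τ (morMap L.qFunctor f) : Set (Mor C × Mor C)),
        Nonempty ((elN N p.1.1 : Type w) ≃ elN N (F p).1.1) := fun p =>
      KM.classCoeff hinv (hiso σ hσ) p.2.1 (F p).2.1
    exact ⟨Ef.trans ((Equiv.sigmaCongr F fun p => Classical.choice (coeff p)).trans Eg.symm)⟩
  have himg : ∀ σ : Set (Mor C), morMap L.qFunctor '' (morMap L.qFunctor ⁻¹' σ) = σ :=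
    fun σ => Set.image_preimage_eq σ hsurj
  have hproper : IsProperQSMor (preimagePart L Q.part) Q.part L.qFunctor := by
    constructor
    · rintro s ⟨σ, hσ, rfl⟩
      exact ⟨σ, hσ, Set.image_preimage_subset _ _⟩
    · rintro s₁ ⟨σ₁, hσ₁, rfl⟩ s₂ ⟨σ₂, hσ₂, rfl⟩ τ hτ h1 h2
      rw [himg σ₁] at h1
      rw [himg σ₂] at h2
      obtain ⟨m₁, hm₁⟩ := hne σ₁ hσ₁
      obtain ⟨m₂, hm₂⟩ := hne σ₂ hσ₂
      rw [huniqC m₁ σ₁ τ hσ₁ hτ hm₁ (h1 hm₁), huniqC m₂ σ₂ τ hσ₂ hτ hm₂ (h2 hm₂)]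
  refine ⟨⟨preimagePart L Q.part, hpart, hconcat⟩, rfl, hproper, ?_⟩
  intro S'' hq
  show S''.part = preimagePart L Q.part
  have key : ∀ s ∈ S''.part, ∃ τ ∈ Q.part, s = morMap L.qFunctor ⁻¹' τ := by
    intro s hs
    obtain ⟨τ, hτ, hsub⟩ := hq.1 s hs
    refine ⟨τ, hτ, Set.Subset.antisymm (fun m hm => hsub (Set.mem_image_of_mem _ hm)) ?_⟩
    intro m hm
    obtain ⟨s', ⟨hs', hms'⟩, -⟩ := S''.isPartition.2 m
    obtain ⟨τ', hτ', hsub'⟩ := hq.1 s' hs'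
    have hmem' : morMap L.qFunctor m ∈ τ' := hsub' (Set.mem_image_of_mem _ hms')
    have hττ : τ' = τ := huniqC (morMap L.qFunctor m) τ' τ hτ' hτ hmem' hm
    rw [hττ] at hsub'
    have hss : s = s' := hq.2 s hs s' hs' τ hτ hsub hsub'
    rw [hss]; exact hms'
  ext s
  constructor
  · intro hs
    obtain ⟨τ, hτ, rfl⟩ := key s hs
    exact ⟨τ, hτ, rfl⟩
  · rintro ⟨τ, hτ, rfl⟩
    obtain ⟨m, hm⟩ := hne τ hτ
    obtain ⟨w, hw⟩ := hsurj m
    obtain ⟨s', ⟨hs', hws'⟩, -⟩ := S''.isPartition.2 w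
    obtain ⟨τ', hτ', hseq⟩ := key s' hs'
    have hwτ' : morMap L.qFunctor w ∈ τ' := by rw [hseq] at hws'; exact hws'
    have hττ : τ' = τ := huniqC (morMap L.qFunctor w) τ' τ hτ' hτ hwτ' (by rw [hw]; exact hm)
    rw [← hττ, ← hseq]
    exact hs'
end

section
/- Let (X,S) be an association scheme and let C denote the underlying category of j(X,S). Then every linear extension D₊ → E →(q) C is split: there exists a functor s : C → E with q∘s = id_C. In particular, every schemoid extension of j(X,S) is split. -/
open CategoryTheory

universe v u

universe v₂ u₂

section Aux

variable {X : Type u}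

instance jcat_hom_subsingleton {x y : JCat X} : Subsingleton (x ⟶ y) :=
  ⟨fun _ _ => rfl⟩

instance factcat_hom_subsingleton {f g : FactCat (JCat X)} : Subsingleton (f ⟶ g) :=
  ⟨fun a b => Subtype.ext
    (Prod.ext (Subsingleton.elim _ _) (Subsingleton.elim _ _))⟩

lemma elCast_jcat (N : FactCat (JCat X) ⥤ AddCommGrpCat.{w}) {x y : JCat X}
    {f g : x ⟶ y} (h : f = g) (a : elN N (mk3 f)) : elCast N h a = a := rfl

variable (N : FactCat (JCat X) ⥤ AddCommGrpCat.{w})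

lemma fpush_zero {x y z : JCat X} (g : x ⟶ y) (f : y ⟶ z) :
    fpush N g f (0 : elN N (mk3 g)) = 0 :=
  (N.map (factPushHom g f)).hom.map_zero

lemma fpull_surj {x y z : JCat X} (g : x ⟶ y) (f : y ⟶ z) :
    Function.Surjective (fpull N g f) := by
  intro b
  have back : toFactCat (mk3 (g ≫ f)) ⟶ toFactCat (mk3 f) := ⟨(⟨⟩, ⟨⟩), rfl⟩
  refine ⟨N.map back b, ?_⟩
  have hco : back ≫ factPullHom g f = 𝟙 (toFactCat (mk3 (g ≫ f))) :=
    Subsingleton.elim _ _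
  show (N.map back ≫ N.map (factPullHom g f)) b = b
  rw [← N.map_comp, hco, N.map_id]; rfl

variable (L : LinExt (JCat X) N)

lemma jcat_act_add {x y : JCat X} (e : L.hom x y) (a b : elN N (mk3 (L.q e))) :
    L.act (L.act e a) b = L.act e (a + b) :=
  L.act_add e a b

lemma jcat_distrib {x y z : JCat X} (g₀ : L.hom x y) (f₀ : L.hom y z)
    (β : elN N (mk3 (L.q g₀))) (α : elN N (mk3 (L.q f₀))) :
    L.comp' (L.act g₀ β) (L.act f₀ α) =
      L.act (L.comp' g₀ f₀)
        (fpush N (L.q g₀) (L.q f₀) β + fpull N (L.q g₀) (L.q f₀) α) :=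
  L.distrib g₀ f₀ β α

lemma jcat_act_congr {x y : JCat X} (e₁ e₂ : L.hom x y) (h : e₁ = e₂)
    (a : elN N (mk3 (L.q e₁))) : L.act e₁ a = L.act e₂ a := by
  subst h; rfl

lemma jcat_act_inj {x y : JCat X} (e : L.hom x y) (a b : elN N (mk3 (L.q e)))
    (h : L.act e a = L.act e b) : a = b := by
  have h1 : L.act (L.act e b) (a - b) = L.act e b := by
    rw [jcat_act_add, show b + (a - b) = a from by abel, h]
  have h2 : (a - b : elN N (mk3 (L.q e))) = 0 := L.act_free (L.act e b) (a - b) h1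
  exact sub_eq_zero.mp h2

lemma jcat_fpush_endo {y : JCat X} (g f : y ⟶ y) (a : elN N (mk3 g)) :
    fpush N g f a = a := by
  have h : factPushHom g f = 𝟙 (toFactCat (mk3 g)) := Subsingleton.elim _ _
  show N.map (factPushHom g f) a = a
  rw [h, N.map_id]; rfl

lemma jcat_fpull_endo {y : JCat X} (g f : y ⟶ y) (a : elN N (mk3 f)) :
    fpull N g f a = a := by
  have h : factPullHom g f = 𝟙 (toFactCat (mk3 f)) := Subsingleton.elim _ _
  show N.map (factPullHom g f) a = a
  rw [h, N.map_id]; rfl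

/-- Every `u : hom x y` in the total category of a linear extension over `JCat X`
admits a right inverse. -/
lemma jcat_right_inv {x y : JCat X} (u : L.hom x y) :
    ∃ v : L.hom y x, L.comp' u v = L.id' x := by
  obtain ⟨w, -⟩ := L.q_surj (⟨⟩ : (y : JCat X) ⟶ x)
  set c := L.comp' u w with hc
  obtain ⟨a, ha⟩ := L.act_trans c (L.id' x) rfl
  obtain ⟨α, hα⟩ := fpull_surj N (L.q u) (L.q w) a
  refine ⟨L.act w α, ?_⟩
  calc L.comp' u (L.act w α)
      = L.comp' (L.act u 0) (L.act w α) := by rw [L.act_zero]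
    _ = L.act c (fpush N (L.q u) (L.q w) 0 + fpull N (L.q u) (L.q w) α) :=
        jcat_distrib N L u w 0 α
    _ = L.act c a := by rw [fpush_zero, zero_add, hα]
    _ = L.id' x := ha

lemma jcat_left_of_right {x y : JCat X} (u : L.hom x y) (v : L.hom y x)
    (huv : L.comp' u v = L.id' x) : L.comp' v u = L.id' y := by
  set e := L.comp' v u with he
  have hidem : L.comp' e e = e := by
    rw [he, L.assoc', ← L.assoc' u v u, huv, L.id_comp']
  obtain ⟨a, ha⟩ := L.act_trans (L.id' y) e rfl
  have h2 : L.act (L.id' y) (a + a) = L.act (L.id' y) a := by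
    calc L.act (L.id' y) (a + a)
        = L.act (L.id' y)
            (fpush N (L.q (L.id' y)) (L.q (L.id' y)) a +
             fpull N (L.q (L.id' y)) (L.q (L.id' y)) a) := by
          rw [jcat_fpush_endo, jcat_fpull_endo]
      _ = L.act (L.comp' (L.id' y) (L.id' y))
            (fpush N (L.q (L.id' y)) (L.q (L.id' y)) a +
             fpull N (L.q (L.id' y)) (L.q (L.id' y)) a) :=
          jcat_act_congr N L _ _ (L.id_comp' (L.id' y)).symm _
      _ = L.comp' (L.act (L.id' y) a) (L.act (L.id' y) a) :=
          (jcat_distrib N L (L.id' y) (L.id' y) a a).symm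
      _ = L.comp' e e := by rw [ha]
      _ = e := hidem
      _ = L.act (L.id' y) a := ha.symm
  have h3 : a + a = a := jcat_act_inj N L (L.id' y) _ _ h2
  have h4 : a = 0 := by
    have h5 : a + a = a + 0 := by rw [add_zero]; exact h3
    exact add_left_cancel h5
  rw [← ha, h4, L.act_zero]

end Aux

/-- Corollary 5.7 of Kuribayashi–Matsuo: for an association scheme `(X,S)` with
underlying category `C` of `j(X,S)`, every linear extension `D₊ → E → C` is split;
in particular every schemoid extension of `j(X,S)` is split. -/
theorem linExt_over_jCat_split
    {X : Type u} [Fintype X] (A : AssocScheme X)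
    (N : FactCat (JCat X) ⥤ AddCommGrpCat.{w}) (L : LinExt (JCat X) N) :
    ∃ s : JCat X ⥤ L.Carrier, s ⋙ L.qFunctor = 𝟭 (JCat X) := by
  rcases isEmpty_or_nonempty X with hE | hne
  · have hE' : IsEmpty (JCat X) := hE
    refine ⟨⟨fun x => x, fun {x y} _ => hE'.elim x,
      fun x => hE'.elim x, fun {x y z} _ _ => hE'.elim x⟩, ?_⟩
    exact CategoryTheory.Functor.ext (fun x => hE'.elim x) (fun x y f => hE'.elim x)
  · obtain ⟨x₀'⟩ := hne
    have x₀ : JCat X := x₀'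
    have u : ∀ y : JCat X, L.hom x₀ y := fun y => (L.q_surj (⟨⟩ : (x₀ : JCat X) ⟶ y)).choose
    choose v hv using fun y : JCat X => jcat_right_inv N L (u y)
    have hv' : ∀ y : JCat X, L.comp' (v y) (u y) = L.id' y :=
      fun y => jcat_left_of_right N L (u y) (v y) (hv y)
    refine ⟨⟨fun x => x, fun {x y} _ => L.comp' (v x) (u y), ?_, ?_⟩, ?_⟩
    · intro x
      exact hv' x
    · intro x y z f g
      show L.comp' (v x) (u z) = L.comp' (L.comp' (v x) (u y)) (L.comp' (v y) (u z))
      rw [L.assoc', ← L.assoc' (u y) (v y) (u z), hv y, L.id_comp']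
    · exact CategoryTheory.Functor.ext (fun x => rfl)
        (fun x y f => Subsingleton.elim _ _)
end
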